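/- Frank–Wolfe with exact line search converges to stationary points: let X ⊆ ℝ^n be a nonempty compact convex set and f : ℝ^n → ℝ be continuously differentiable. Let {x^(k)}, {s^(k)}, {α^(k)} be sequences with x^(0) ∈ X and, for every k: s^(k) ∈ argmin_{s∈X} ⟨∇f(x^(k)), s⟩; α^(k) ∈ argmin_{α∈[0,1]} f(x^(k) + α(s^(k) − x^(k))); and x^(k+1) = x^(k) + α^(k)(s^(k) − x^(k)). Then every limit point x* of {x^(k)} (i.e. every limit of a convergent subsequence) satisfies ⟨∇f(x*), y − x*⟩ ≥ 0 for all y ∈ X, i.e. x* is a stationary point of min_{x∈X} f(x). -/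

import Mathlib

set_option maxHeartbeats 2000000 in
/-- Frank–Wolfe with exact line search converges to stationary points: every
limit point of the iterates satisfies the first-order variational inequality. -/
theorem stmt7 (n : ℕ)
    (X : Set (EuclideanSpace ℝ (Fin n)))
    (hXne : X.Nonempty) (hXcompact : IsCompact X) (hXconvex : Convex ℝ X)
    (f : EuclideanSpace ℝ (Fin n) → ℝ) (hf : ContDiff ℝ 1 f)
    (x s : ℕ → EuclideanSpace ℝ (Fin n)) (α : ℕ → ℝ)
    (hx0 : x 0 ∈ X)
    (hs : ∀ k, s k ∈ X ∧ ∀ z ∈ X,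
      (inner ℝ (gradient f (x k)) (s k) : ℝ) ≤ inner ℝ (gradient f (x k)) z)
    (hα : ∀ k, α k ∈ Set.Icc (0 : ℝ) 1 ∧ ∀ β ∈ Set.Icc (0 : ℝ) 1,
      f (x k + α k • (s k - x k)) ≤ f (x k + β • (s k - x k)))
    (hupd : ∀ k, x (k + 1) = x k + α k • (s k - x k))
    (xstar : EuclideanSpace ℝ (Fin n)) (φ : ℕ → ℕ) (hφ : StrictMono φ)
    (hlim : Filter.Tendsto (fun k => x (φ k)) Filter.atTop (nhds xstar)) :
    ∀ y ∈ X, 0 ≤ (inner ℝ (gradient f xstar) (y - xstar) : ℝ) := by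
  intro y hy
  by_contra hcon
  push_neg at hcon
  set G := fderiv ℝ f with hG
  have hfd : ∀ u, DifferentiableAt ℝ f u := fun u => (hf.differentiable one_ne_zero) u
  have hginner : ∀ u v, (inner ℝ (gradient f u) v : ℝ) = G u v := by
    intro u v
    rw [gradient]
    exact InnerProductSpace.toDual_symm_apply
  have hGc : Continuous G := hf.continuous_fderiv one_ne_zero
  -- all iterates stay in X
  have hxX : ∀ k, x k ∈ X := by
    intro k
    induction k with
    | zero => exact hx0
    | succ k ih =>
      rw [hupd k]
      have hks := (hs k).1
      have hk0 := (hα k).1.1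
      have hk1 := (hα k).1.2
      have heq : x k + α k • (s k - x k) = (1 - α k) • x k + α k • s k := by
        rw [smul_sub, sub_smul, one_smul]; abel
      rw [heq]
      exact hXconvex ih hks (by linarith) hk0 (by ring)
  -- f(x k) is antitone
  have hdec : ∀ k, f (x (k + 1)) ≤ f (x k) := by
    intro k
    have h := (hα k).2 0 ⟨le_refl 0, zero_le_one⟩
    rw [hupd k]
    simpa using h
  have hanti : Antitone fun k => f (x k) := antitone_nat_of_succ_le hdec
  -- f bounded below on X
  obtain ⟨m, hmX, hm⟩ := hXcompact.exists_isMinOn hXne hf.continuous.continuousOn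
  have hbdd : BddBelow (Set.range fun k => f (x k)) := by
    refine ⟨f m, ?_⟩
    rintro r ⟨k, rfl⟩
    exact isMinOn_iff.mp hm _ (hxX k)
  have hLt : Filter.Tendsto (fun k => f (x k)) Filter.atTop (nhds (⨅ k, f (x k))) :=
    tendsto_atTop_ciInf hanti hbdd
  set L := ⨅ k, f (x k) with hLdef
  -- diameter bound
  obtain ⟨C, hC⟩ := Metric.isBounded_iff.mp hXcompact.isBounded
  set D := max C 1 with hDdef
  have hD1 : (1 : ℝ) ≤ D := le_max_right _ _
  have hD0 : (0 : ℝ) < D := by linarith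
  have hDle : ∀ a ∈ X, ∀ b ∈ X, ‖a - b‖ ≤ D := by
    intro a ha b hb
    rw [← dist_eq_norm]
    exact (hC ha hb).trans (le_max_left _ _)
  -- the negative directional derivative at xstar
  set δ : ℝ := -(G xstar (y - xstar)) with hδdef
  have hδ0 : 0 < δ := by
    have := hcon
    rw [hginner] at this
    simp only [hδdef]
    linarith
  -- uniform continuity of G on X
  have hGuc : UniformContinuousOn G X :=
    hXcompact.uniformContinuousOn_of_continuous hGc.continuousOn
  rw [Metric.uniformContinuousOn_iff] at hGuc
  set ε : ℝ := δ / (4 * D) with hεdef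
  have hε0 : 0 < ε := by positivity
  obtain ⟨δ₀, hδ₀, hUC⟩ := hGuc ε hε0
  set β : ℝ := min (δ₀ / (2 * D)) 1 with hβdef
  have hβ0 : 0 < β := lt_min (by positivity) one_pos
  have hβ1 : β ≤ 1 := min_le_right _ _
  have hβD : β * D < δ₀ := by
    have h1 : β ≤ δ₀ / (2 * D) := min_le_left _ _
    have h2 : β * D ≤ (δ₀ / (2 * D)) * D := by nlinarith
    have h3 : (δ₀ / (2 * D)) * D = δ₀ / 2 := by field_simp
    linarith
  -- eventually the directional derivative along the subsequence is ≤ -δ/2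
  have hcontd : Continuous fun u => G u (y - u) :=
    hGc.clm_apply (continuous_const.sub continuous_id)
  have htd : Filter.Tendsto (fun k => G (x (φ k)) (y - x (φ k))) Filter.atTop
      (nhds (G xstar (y - xstar))) := (hcontd.tendsto xstar).comp hlim
  have hev : ∀ᶠ k in Filter.atTop, G (x (φ k)) (y - x (φ k)) < -(δ / 2) :=
    htd.eventually_lt_const (by simp only [hδdef] at *; linarith)
  obtain ⟨K, hK⟩ := Filter.eventually_atTop.mp hev
  -- key descent estimate for k ≥ K
  have hkey : ∀ k ≥ K, f (x (φ k + 1)) - f (x (φ k)) ≤ -(β * δ / 4) := by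
    intro k hk
    set a := x (φ k) with ha
    set d := s (φ k) - a with hd
    have haX : a ∈ X := hxX (φ k)
    have hsX : s (φ k) ∈ X := (hs (φ k)).1
    have hdD : ‖d‖ ≤ D := hDle _ hsX _ haX
    set b := a + β • d with hb
    have hbX : b ∈ X := by
      have heq : a + β • d = (1 - β) • a + β • s (φ k) := by
        rw [hd, smul_sub, sub_smul, one_smul]; abel
      rw [hb, heq]
      exact hXconvex haX hsX (by linarith) hβ0.le (by ring)
    have hseg : segment ℝ a b ⊆ X := hXconvex.segment_subset haX hbX
    -- directional derivative bound at a
    have hGad : G a d ≤ -(δ / 2) := by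
      have h1 := (hs (φ k)).2 y hy
      rw [hginner, hginner] at h1
      have h2 : G a d = G a (s (φ k)) - G a a := by rw [hd, map_sub]
      have h3 : G a (y - a) = G a y - G a a := by rw [map_sub]
      have h4 := hK k hk
      rw [h3] at h4
      linarith [h1, h4, h2.le, h2.ge]
    -- mean value estimate with g = f - G a
    have hmean : f b - f a - G a (b - a) ≤ ε * ‖b - a‖ := by
      set g : EuclideanSpace ℝ (Fin n) → ℝ := fun u => f u - G a u with hgdef
      have hgd : ∀ u ∈ segment ℝ a b, DifferentiableAt ℝ g u := fun u _ =>
        (hfd u).sub ((G a).differentiable.differentiableAt)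
      have hgfd : ∀ u ∈ segment ℝ a b, ‖fderiv ℝ g u‖ ≤ ε := by
        intro u hu
        have huX : u ∈ X := hseg hu
        have hfder : fderiv ℝ g u = G u - G a := by
          rw [hgdef]
          rw [fderiv_fun_sub (hfd u) ((G a).differentiable.differentiableAt),
            ContinuousLinearMap.fderiv]
        have hdist : dist u a < δ₀ := by
          obtain ⟨p, q, hp, hq, hpq, hu'⟩ := hu
          have hua : u - a = (q * β) • d := by
            rw [← hu', hb]
            have hp' : p = 1 - q := by linarith
            rw [hp']
            module
          rw [dist_eq_norm, hua, norm_smul, Real.norm_eq_abs,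
            abs_of_nonneg (mul_nonneg hq hβ0.le)]
          have hq1 : q ≤ 1 := by linarith
          have h1 : q * β * ‖d‖ ≤ β * ‖d‖ := by
            nlinarith [mul_nonneg (mul_nonneg (sub_nonneg.mpr hq1) hβ0.le) (norm_nonneg d)]
          have h2 : β * ‖d‖ ≤ β * D := mul_le_mul_of_nonneg_left hdD hβ0.le
          linarith
        have := hUC u huX a haX hdist
        rw [dist_eq_norm] at this
        rw [hfder]
        exact this.le
      have := (convex_segment a b).norm_image_sub_le_of_norm_fderiv_le hgd hgfd
        (left_mem_segment ℝ a b) (right_mem_segment ℝ a b)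
      have heq : g b - g a = f b - f a - G a (b - a) := by
        simp only [hgdef, map_sub]
        ring
      calc f b - f a - G a (b - a) ≤ |g b - g a| := by rw [heq]; exact le_abs_self _
        _ = ‖g b - g a‖ := rfl
        _ ≤ ε * ‖b - a‖ := this
    -- assemble
    have hba : b - a = β • d := by rw [hb]; abel
    have hGba : G a (b - a) = β * G a d := by rw [hba, map_smul]; rfl
    have hnba : ‖b - a‖ ≤ β * D := by
      rw [hba, norm_smul, Real.norm_eq_abs, abs_of_nonneg hβ0.le]
      nlinarith
    have hfb : f b - f a ≤ -(β * δ / 4) := by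
      have h1 : f b - f a ≤ β * G a d + ε * ‖b - a‖ := by linarith [hmean, hGba.le, hGba.ge]
      have h2 : ε * ‖b - a‖ ≤ ε * (β * D) := by nlinarith [norm_nonneg (b - a)]
      have h3 : ε * (β * D) = β * δ / 4 := by
        rw [hεdef]; field_simp
      nlinarith [hGad, hβ0.le]
    have hstep : f (x (φ k + 1)) ≤ f b := by
      rw [hupd (φ k), hb]
      exact (hα (φ k)).2 β ⟨hβ0.le, hβ1⟩
    linarith
  -- contradiction with convergence of f (x k)
  have htφ : Filter.Tendsto φ Filter.atTop Filter.atTop := hφ.tendsto_atTop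
  have htφ1 : Filter.Tendsto (fun k => φ k + 1) Filter.atTop Filter.atTop :=
    Filter.tendsto_atTop_mono (fun k => Nat.le_succ _) htφ
  have ht1 : Filter.Tendsto (fun k => f (x (φ k))) Filter.atTop (nhds L) := hLt.comp htφ
  have ht2 : Filter.Tendsto (fun k => f (x (φ k + 1))) Filter.atTop (nhds L) := hLt.comp htφ1
  have ht0 : Filter.Tendsto (fun k => f (x (φ k + 1)) - f (x (φ k))) Filter.atTop
      (nhds 0) := by
    have := ht2.sub ht1
    simpa using this
  have hfin : (0 : ℝ) ≤ -(β * δ / 4) := by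
    refine le_of_tendsto ht0 ?_
    exact Filter.eventually_atTop.mpr ⟨K, hkey⟩
  nlinarith
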